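/- arXiv:2503.20066 — 4 statements merged into one kernel-verified Lean document; each statement's English description precedes it below -/
import Mathlib

section
/- Consider the ellipsoid E = { y ∈ ℝ³ : (y−c)^T R Q₀⁻² R^T (y−c) ≤ 1 } with c ∈ ℝ³, R ∈ SO(3), Q₀ = diag(r), r ∈ ℝ³₊. For a ray from p in unit direction v, set p' = R^T(p−c), v' = R^T v, w' = p'×v', Q₁ = det(Q₀)·Q₀⁻¹, and i(p,v) = v'^T Q₁² v' − w'^T Q₀² w'. Then the line {p + d v : d ∈ ℝ} intersects ∂E if and only if i(p,v) ≥ 0, and when i(p,v) ≥ 0 the smaller root of the intersection equation is d = −( det(Q₀)·√(i(p,v)) + p'^T Q₁² v' ) / ( v'^T Q₁² v' ). -/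
open Matrix
open scoped Matrix

open Matrix
open scoped Matrix

/-- Roots of `a d^2 + 2 b d + e = 0` with `a > 0`. -/
lemma quad_aux (a b e : ℝ) (ha : 0 < a) :
    ((∃ d : ℝ, a * d ^ 2 + 2 * b * d + e = 0) ↔ 0 ≤ b ^ 2 - a * e) ∧
    (0 ≤ b ^ 2 - a * e →
      (a * ((-b - Real.sqrt (b ^ 2 - a * e)) / a) ^ 2 +
        2 * b * ((-b - Real.sqrt (b ^ 2 - a * e)) / a) + e = 0 ∧
      ∀ d : ℝ, a * d ^ 2 + 2 * b * d + e = 0 →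
        (-b - Real.sqrt (b ^ 2 - a * e)) / a ≤ d)) := by
  have ha' : a ≠ 0 := ne_of_gt ha
  have key : ∀ d : ℝ, a * d ^ 2 + 2 * b * d + e = 0 ↔ (a * d + b) ^ 2 = b ^ 2 - a * e := by
    intro d
    constructor
    · intro h; nlinarith [h]
    · intro h; nlinarith [h]
  constructor
  · constructor
    · rintro ⟨d, hd⟩
      rw [key] at hd
      rw [← hd]; positivity
    · intro hdisc
      refine ⟨(-b + Real.sqrt (b ^ 2 - a * e)) / a, ?_⟩
      rw [key]
      have : a * ((-b + Real.sqrt (b ^ 2 - a * e)) / a) + b = Real.sqrt (b ^ 2 - a * e) := by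
        field_simp
        ring
      rw [this, Real.sq_sqrt hdisc]
  · intro hdisc
    set s := Real.sqrt (b ^ 2 - a * e) with hs
    have hs0 : 0 ≤ s := Real.sqrt_nonneg _
    have hss : s ^ 2 = b ^ 2 - a * e := Real.sq_sqrt hdisc
    have hroot : a * ((-b - s) / a) + b = -s := by field_simp; ring
    constructor
    · rw [key, hroot]; rw [← hss]; ring
    · intro d hd
      rw [key] at hd
      have h1 : (a * d + b) ^ 2 = s ^ 2 := by rw [hss]; exact hd
      have h2 : -s ≤ a * d + b := by nlinarith [sq_nonneg (a * d + b + s)]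
      rw [div_le_iff₀ ha] at *
      nlinarith

/-- The frontier of a quadric sublevel set. -/
lemma frontier_quadric (A : Matrix (Fin 3) (Fin 3) ℝ) (c : Fin 3 → ℝ) (y : Fin 3 → ℝ) :
    y ∈ frontier {y : Fin 3 → ℝ | (y - c) ⬝ᵥ (A *ᵥ (y - c)) ≤ 1} ↔
      (y - c) ⬝ᵥ (A *ᵥ (y - c)) = 1 := by
  set f : (Fin 3 → ℝ) → ℝ := fun y => (y - c) ⬝ᵥ (A *ᵥ (y - c)) with hf_def
  have hf : Continuous f := by
    simp only [hf_def, dotProduct, mulVec]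
    exact continuous_finset_sum _ fun i _ =>
      (((continuous_apply i).sub continuous_const).mul
        (continuous_finset_sum _ fun j _ =>
          continuous_const.mul ((continuous_apply j).sub continuous_const)))
  have hscale : ∀ (t : ℝ) (y : Fin 3 → ℝ), f (c + t • (y - c)) = t ^ 2 * f y := by
    intro t y
    have h1 : c + t • (y - c) - c = t • (y - c) := by abel
    simp only [hf_def, h1, Matrix.mulVec_smul, smul_dotProduct, dotProduct_smul,
      smul_eq_mul]
    ring
  have hE : {y : Fin 3 → ℝ | (y - c) ⬝ᵥ (A *ᵥ (y - c)) ≤ 1} = f ⁻¹' Set.Iic 1 := rfl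
  rw [hE]
  have hclosed : IsClosed (f ⁻¹' Set.Iic 1) := isClosed_Iic.preimage hf
  have hint : interior (f ⁻¹' Set.Iic 1) = f ⁻¹' Set.Iio 1 := by
    apply le_antisymm
    · intro y hy
      have hle : y ∈ f ⁻¹' Set.Iic 1 := interior_subset hy
      rw [Set.mem_preimage, Set.mem_Iic] at hle
      rcases lt_or_eq_of_le hle with h | h
      · exact h
      · exfalso
        have hg : Filter.Tendsto (fun t : ℝ => c + t • (y - c)) (nhdsWithin 1 (Set.Ioi 1))
            (nhds y) := by
          have hc : Continuous fun t : ℝ => c + t • (y - c) :=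
            continuous_const.add (continuous_id.smul continuous_const)
          have h := (hc.tendsto 1).mono_left (nhdsWithin_le_nhds (s := Set.Ioi 1))
          simpa using h
        have h1 : ∀ᶠ t in nhdsWithin (1:ℝ) (Set.Ioi 1),
            (fun t : ℝ => c + t • (y - c)) t ∈ interior (f ⁻¹' Set.Iic 1) :=
          hg.eventually (isOpen_interior.eventually_mem hy)
        have h2 : ∀ᶠ t in nhdsWithin (1:ℝ) (Set.Ioi 1), (1:ℝ) < t :=
          eventually_mem_nhdsWithin
        obtain ⟨t, ht1, ht2⟩ := (h1.and h2).exists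
        have hmem : c + t • (y - c) ∈ f ⁻¹' Set.Iic 1 := interior_subset ht1
        rw [Set.mem_preimage, Set.mem_Iic] at hmem
        rw [hscale] at hmem
        nlinarith
    · exact interior_maximal (fun y (hy : f y < 1) => le_of_lt hy) (isOpen_Iio.preimage hf)
  rw [frontier, hclosed.closure_eq, hint]
  constructor
  · rintro ⟨h1, h2⟩
    exact le_antisymm h1 (not_lt.mp fun h => h2 h)
  · intro h
    have h' : f y = 1 := h
    exact ⟨le_of_eq h', by simp [Set.mem_preimage, h']⟩

lemma dot_diag_three (m x y : Fin 3 → ℝ) :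
    x ⬝ᵥ (Matrix.diagonal m *ᵥ y) =
      m 0 * (x 0 * y 0) + m 1 * (x 1 * y 1) + m 2 * (x 2 * y 2) := by
  simp [dotProduct, Matrix.mulVec_diagonal, Fin.sum_univ_three]
  ring

lemma hind_poly (r0 r1 r2 P0 P1 P2 V0 V1 V2 : ℝ) (h0 : r0 ≠ 0) (h1 : r1 ≠ 0) (h2 : r2 ≠ 0) :
    (r0*r1*r2)^2 * (V0^2/r0^2 + V1^2/r1^2 + V2^2/r2^2)
    - (r0*r0*((P1*V2 - P2*V1)*(P1*V2-P2*V1)) + r1*r1*((P2*V0-P0*V2)*(P2*V0-P0*V2))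
      + r2*r2*((P0*V1-P1*V0)*(P0*V1-P1*V0)))
    = (r0*r1*r2)^2 * ((P0*V0/r0^2 + P1*V1/r1^2 + P2*V2/r2^2)^2
      - (V0^2/r0^2+V1^2/r1^2+V2^2/r2^2) * ((P0^2/r0^2+P1^2/r1^2+P2^2/r2^2) - 1)) := by
  field_simp
  ring

set_option maxHeartbeats 1000000 in
/-- Line–ellipsoid intersection: the line `{p + d • v}` meets the boundary of the ellipsoid
`E = {y | (y-c)ᵀ R Q₀⁻² Rᵀ (y-c) ≤ 1}` iff the intersection indicator
`i(p,v) = v'ᵀ Q₁² v' - w'ᵀ Q₀² w'` is nonnegative, and in that case the smaller root is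
`d = -(det Q₀ √i + p'ᵀ Q₁² v') / (v'ᵀ Q₁² v')`. -/
theorem ellipsoid_line_intersection
    (c p v : Fin 3 → ℝ) (R : Matrix (Fin 3) (Fin 3) ℝ)
    (hR : R ∈ Matrix.orthogonalGroup (Fin 3) ℝ) (hRdet : R.det = 1)
    (r : Fin 3 → ℝ) (hr : ∀ i, 0 < r i)
    (hv : v ⬝ᵥ v = 1) :
    let Q₀ : Matrix (Fin 3) (Fin 3) ℝ := Matrix.diagonal r
    let Q₁ : Matrix (Fin 3) (Fin 3) ℝ := Q₀.det • Q₀⁻¹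
    let E : Set (Fin 3 → ℝ) :=
      {y | (y - c) ⬝ᵥ ((R * Q₀⁻¹ * Q₀⁻¹ * Rᵀ) *ᵥ (y - c)) ≤ 1}
    let p' : Fin 3 → ℝ := Rᵀ *ᵥ (p - c)
    let v' : Fin 3 → ℝ := Rᵀ *ᵥ v
    let w' : Fin 3 → ℝ := p' ⨯₃ v'
    let ind : ℝ := v' ⬝ᵥ ((Q₁ ^ 2) *ᵥ v') - w' ⬝ᵥ ((Q₀ ^ 2) *ᵥ w')
    ((∃ d : ℝ, p + d • v ∈ frontier E) ↔ 0 ≤ ind) ∧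
    (0 ≤ ind →
      let dm : ℝ := -(Q₀.det * Real.sqrt ind + p' ⬝ᵥ ((Q₁ ^ 2) *ᵥ v')) /
        (v' ⬝ᵥ ((Q₁ ^ 2) *ᵥ v'))
      p + dm • v ∈ frontier E ∧ ∀ d : ℝ, p + d • v ∈ frontier E → dm ≤ d) := by
  intro Q₀ Q₁ E p' v' w' ind
  have hr0 : ∀ i, r i ≠ 0 := fun i => ne_of_gt (hr i)
  set D : ℝ := r 0 * r 1 * r 2 with hD_def
  have hD : 0 < D := by rw [hD_def]; exact mul_pos (mul_pos (hr 0) (hr 1)) (hr 2)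
  have hQ0inv : Q₀⁻¹ = Matrix.diagonal (fun i => (r i)⁻¹) := by
    apply Matrix.inv_eq_right_inv
    show Matrix.diagonal r * _ = 1
    rw [Matrix.diagonal_mul_diagonal]
    convert Matrix.diagonal_one using 2
    funext i
    exact mul_inv_cancel₀ (hr0 i)
  have hdet : Q₀.det = D := by
    show (Matrix.diagonal r).det = D
    simp [Matrix.det_diagonal, Fin.prod_univ_three, hD_def]
  have hRRT : R * Rᵀ = 1 := by
    rw [Matrix.mem_orthogonalGroup_iff] at hR
    simpa using hR
  -- quadratic coefficients
  set a : ℝ := v' 0 ^ 2 / r 0 ^ 2 + v' 1 ^ 2 / r 1 ^ 2 + v' 2 ^ 2 / r 2 ^ 2 with ha_def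
  set b : ℝ := p' 0 * v' 0 / r 0 ^ 2 + p' 1 * v' 1 / r 1 ^ 2 + p' 2 * v' 2 / r 2 ^ 2 with hb_def
  set e : ℝ := p' 0 ^ 2 / r 0 ^ 2 + p' 1 ^ 2 / r 1 ^ 2 + p' 2 ^ 2 / r 2 ^ 2 with he_def
  -- membership key
  have hconj : ∀ x : Fin 3 → ℝ, x ⬝ᵥ ((R * Q₀⁻¹ * Q₀⁻¹ * Rᵀ) *ᵥ x)
      = (Rᵀ *ᵥ x) ⬝ᵥ ((Q₀⁻¹ * Q₀⁻¹) *ᵥ (Rᵀ *ᵥ x)) := by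
    intro x
    rw [show R * Q₀⁻¹ * Q₀⁻¹ * Rᵀ = R * (Q₀⁻¹ * Q₀⁻¹ * Rᵀ) by
      rw [mul_assoc, mul_assoc, mul_assoc]]
    rw [← Matrix.mulVec_mulVec, Matrix.dotProduct_mulVec, ← Matrix.mulVec_transpose,
      ← Matrix.mulVec_mulVec]
  have hMdiag : Q₀⁻¹ * Q₀⁻¹ = Matrix.diagonal (fun i => (r i)⁻¹ * (r i)⁻¹) := by
    rw [hQ0inv, Matrix.diagonal_mul_diagonal]
  have hx : ∀ d : ℝ, Rᵀ *ᵥ (p + d • v - c) = fun i => p' i + d * v' i := by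
    intro d
    have h1 : p + d • v - c = (p - c) + d • v := by abel
    rw [h1, Matrix.mulVec_add, Matrix.mulVec_smul]
    funext i
    simp [p', v', Pi.add_apply, Pi.smul_apply, smul_eq_mul]
  have hfq : ∀ d : ℝ, (p + d • v - c) ⬝ᵥ ((R * Q₀⁻¹ * Q₀⁻¹ * Rᵀ) *ᵥ (p + d • v - c))
      = a * d ^ 2 + 2 * b * d + e := by
    intro d
    rw [hconj, hx d, hMdiag]
    simp only [dotProduct, Matrix.mulVec_diagonal, Fin.sum_univ_three]
    rw [ha_def, hb_def, he_def]
    field_simp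
    ring
  have key : ∀ d : ℝ, (p + d • v ∈ frontier E) ↔ a * d ^ 2 + 2 * b * d + (e - 1) = 0 := by
    intro d
    show p + d • v ∈ frontier {y | (y - c) ⬝ᵥ ((R * Q₀⁻¹ * Q₀⁻¹ * Rᵀ) *ᵥ (y - c)) ≤ 1} ↔ _
    rw [frontier_quadric, hfq d]
    constructor <;> intro h <;> linarith
  -- v' is unit
  have hv' : v' 0 ^ 2 + v' 1 ^ 2 + v' 2 ^ 2 = 1 := by
    have h : v' ⬝ᵥ v' = 1 := by
      show (Rᵀ *ᵥ v) ⬝ᵥ (Rᵀ *ᵥ v) = 1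
      rw [Matrix.dotProduct_mulVec, ← Matrix.mulVec_transpose, Matrix.transpose_transpose,
        Matrix.mulVec_mulVec, hRRT, Matrix.one_mulVec]
      exact hv
    rw [dotProduct, Fin.sum_univ_three] at h
    nlinarith [h]
  have ha : 0 < a := by
    have e0 : 0 ≤ v' 0 ^ 2 / r 0 ^ 2 := by positivity
    have e1 : 0 ≤ v' 1 ^ 2 / r 1 ^ 2 := by positivity
    have e2 : 0 ≤ v' 2 ^ 2 / r 2 ^ 2 := by positivity
    rcases lt_or_ge 0 a with h | h
    · exact h
    · exfalso
      have z : ∀ i : Fin 3, v' i ^ 2 / r i ^ 2 = 0 → v' i = 0 := by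
        intro i hz
        rcases div_eq_zero_iff.mp hz with h' | h'
        · exact pow_eq_zero_iff two_ne_zero |>.mp h'
        · exact absurd (pow_eq_zero_iff two_ne_zero |>.mp h') (hr0 i)
      have z0 := z 0 (le_antisymm (by rw [ha_def] at h; linarith) e0)
      have z1 := z 1 (le_antisymm (by rw [ha_def] at h; linarith) e1)
      have z2 := z 2 (le_antisymm (by rw [ha_def] at h; linarith) e2)
      rw [z0, z1, z2] at hv'
      norm_num at hv'
  -- Q₁² and Q₀² explicit
  have hQ1sq : Q₁ ^ 2 = Matrix.diagonal (fun i => (D * (r i)⁻¹) * (D * (r i)⁻¹)) := by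
    have h1 : Q₁ = Matrix.diagonal (fun i => D * (r i)⁻¹) := by
      show Q₀.det • Q₀⁻¹ = _
      rw [hdet, hQ0inv, ← Matrix.diagonal_smul]
      congr 1
    rw [sq, h1, Matrix.diagonal_mul_diagonal]
  have hQ0sq : Q₀ ^ 2 = Matrix.diagonal (fun i => r i * r i) := by
    show Matrix.diagonal r ^ 2 = _
    rw [sq, Matrix.diagonal_mul_diagonal]
  have hvv : v' ⬝ᵥ ((Q₁ ^ 2) *ᵥ v') = D ^ 2 * a := by
    rw [hQ1sq, dot_diag_three, ha_def]
    field_simp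
  have hpv : p' ⬝ᵥ ((Q₁ ^ 2) *ᵥ v') = D ^ 2 * b := by
    rw [hQ1sq, dot_diag_three, hb_def]
    field_simp
  -- cross product components
  have hw0 : w' 0 = p' 1 * v' 2 - p' 2 * v' 1 := rfl
  have hw1 : w' 1 = p' 2 * v' 0 - p' 0 * v' 2 := rfl
  have hw2 : w' 2 = p' 0 * v' 1 - p' 1 * v' 0 := rfl
  have hind : ind = D ^ 2 * (b ^ 2 - a * (e - 1)) := by
    show v' ⬝ᵥ ((Q₁ ^ 2) *ᵥ v') - w' ⬝ᵥ ((Q₀ ^ 2) *ᵥ w') = _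
    rw [hvv, hQ0sq, dot_diag_three, hw0, hw1, hw2, ha_def, hb_def, he_def, hD_def]
    linear_combination hind_poly (r 0) (r 1) (r 2) (p' 0) (p' 1) (p' 2) (v' 0) (v' 1) (v' 2)
      (hr0 0) (hr0 1) (hr0 2)
  have hD2 : (0:ℝ) < D ^ 2 := pow_pos hD 2
  have ha' : a ≠ 0 := ne_of_gt ha
  have hD' : D ≠ 0 := ne_of_gt hD
  have hdisc_of : 0 ≤ D ^ 2 * (b ^ 2 - a * (e - 1)) → 0 ≤ b ^ 2 - a * (e - 1) := by
    intro h
    by_contra h'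
    push_neg at h'
    nlinarith
  clear_value Q₀ Q₁ E p' v' w' ind
  obtain ⟨hiff, hmin⟩ := quad_aux a b (e - 1) ha
  constructor
  · constructor
    · rintro ⟨d, hd⟩
      rw [key d] at hd
      have : 0 ≤ b ^ 2 - a * (e - 1) := hiff.mp ⟨d, hd⟩
      rw [hind]
      exact mul_nonneg (le_of_lt hD2) this
    · intro h
      rw [hind] at h
      have hdisc : 0 ≤ b ^ 2 - a * (e - 1) := hdisc_of h
      obtain ⟨d, hd⟩ := hiff.mpr hdisc
      exact ⟨d, (key d).mpr hd⟩
  · intro hind0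
    intro dm
    have hdisc : 0 ≤ b ^ 2 - a * (e - 1) := by
      rw [hind] at hind0
      exact hdisc_of hind0
    obtain ⟨hroot, hmin'⟩ := hmin hdisc
    have hsqrt : Real.sqrt ind = D * Real.sqrt (b ^ 2 - a * (e - 1)) := by
      rw [hind, Real.sqrt_mul (sq_nonneg D), Real.sqrt_sq hD.le]
    have hdm : dm = (-b - Real.sqrt (b ^ 2 - a * (e - 1))) / a := by
      show -(Q₀.det * Real.sqrt ind + p' ⬝ᵥ ((Q₁ ^ 2) *ᵥ v')) / (v' ⬝ᵥ ((Q₁ ^ 2) *ᵥ v')) = _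
      rw [hdet, hpv, hvv, hsqrt]
      field_simp
      ring
    refine ⟨?_, ?_⟩
    · rw [key dm, hdm]
      exact hroot
    · intro d hd
      rw [key d] at hd
      rw [hdm]
      exact hmin' d hd
end

section
/- With notation as in the ellipsoid SDDF setup (p' = R^T(p−c), v' = R^T v, w' = p'×v', Q₀ = diag(r), Q₁ = det(Q₀) Q₀⁻¹), the discriminant of the quadratic ½(v'^T Q₁² v') d² + (p'^T Q₁² v') d + ½(p'^T Q₁² p' − det(Q₀)²) = 0 satisfies (p'^T Q₁² v')² − (v'^T Q₁² v')(p'^T Q₁² p' − det(Q₀)²) = ( v'^T Q₁² v' − w'^T Q₀² w' ) · det(Q₀)². -/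
open Matrix
open scoped Matrix

/-- Discriminant identity for the ellipsoid SDDF quadratic: with `Q₀ = diag r`,
`Q₁ = det Q₀ • Q₀⁻¹` and `w' = p' ×₃ v'`,
`(p'ᵀQ₁²v')² - (v'ᵀQ₁²v')(p'ᵀQ₁²p' - (det Q₀)²) = (v'ᵀQ₁²v' - w'ᵀQ₀²w')·(det Q₀)²`. -/
theorem ellipsoid_discriminant_identity
    (r : Fin 3 → ℝ) (hr : ∀ i, 0 < r i) (p' v' : Fin 3 → ℝ) :
    let Q₀ : Matrix (Fin 3) (Fin 3) ℝ := Matrix.diagonal r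
    let Q₁ : Matrix (Fin 3) (Fin 3) ℝ := Q₀.det • Q₀⁻¹
    let w' : Fin 3 → ℝ := p' ⨯₃ v'
    (p' ⬝ᵥ ((Q₁ ^ 2) *ᵥ v')) ^ 2 -
        (v' ⬝ᵥ ((Q₁ ^ 2) *ᵥ v')) * (p' ⬝ᵥ ((Q₁ ^ 2) *ᵥ p') - Q₀.det ^ 2) =
      (v' ⬝ᵥ ((Q₁ ^ 2) *ᵥ v') - w' ⬝ᵥ ((Q₀ ^ 2) *ᵥ w')) * Q₀.det ^ 2 := by
  intro Q₀ Q₁ w'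
  have h0 : ∀ i, r i ≠ 0 := fun i => (hr i).ne'
  have hinv : Q₀⁻¹ = Matrix.diagonal (fun i => (r i)⁻¹) := by
    apply Matrix.inv_eq_right_inv
    simp only [Q₀, Matrix.diagonal_mul_diagonal]
    ext i j; by_cases h : i = j <;> simp [Matrix.diagonal_apply, h, Matrix.one_apply, h0]
  have hdet : Q₀.det = r 0 * r 1 * r 2 := by
    simp [Q₀, Matrix.det_diagonal, Fin.prod_univ_three]
  have hQ1 : Q₁ ^ 2 = Matrix.diagonal (fun i => ((r 0 * r 1 * r 2) * (r i)⁻¹) ^ 2) := by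
    simp only [Q₁, hinv, hdet, sq, Matrix.smul_mul, Matrix.mul_smul,
      Matrix.diagonal_mul_diagonal]
    ext i j; by_cases h : i = j <;> simp [Matrix.diagonal_apply, h] <;> ring
  have hQ0 : Q₀ ^ 2 = Matrix.diagonal (fun i => (r i) ^ 2) := by
    ext i j; by_cases h : i = j <;> simp [Q₀, sq, Matrix.diagonal_apply, h, Matrix.mul_apply]
  have hw : ∀ i, w' i = ![p' 1 * v' 2 - p' 2 * v' 1, p' 2 * v' 0 - p' 0 * v' 2,
      p' 0 * v' 1 - p' 1 * v' 0] i := by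
    intro i; fin_cases i <;> simp [w', crossProduct] <;> ring
  simp only [hQ1, hQ0, hdet, dotProduct, Matrix.mulVec_diagonal, Fin.sum_univ_three,
    hw 0, hw 1, hw 2, Matrix.cons_val_zero, Matrix.cons_val_one, Matrix.head_cons,
    Matrix.cons_val_two, Matrix.tail_cons]
  field_simp [h0 0, h0 1, h0 2]
  ring
end

section
/- Let f(p,v) be the SDDF of an ellipsoid given in the ellipsoid local frame by f = −(det(Q₀)√(i+ε) + t₂)/t₀ with t₀ = v'^T Q₁² v', t₂ = p'^T Q₁² v', i = t₀ − w'^T Q₀² w', w' = p'×v', p' the local position and v' the local unit direction. Then v'^T ∇_{p'} f(p',v') = −1, i.e., the ellipsoid SDDF prior satisfies the directional Eikonal equation. -/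
open Matrix
open scoped Matrix

private lemma diff_quad (v : Fin 3 → ℝ) (M : Matrix (Fin 3) (Fin 3) ℝ) :
    Differentiable ℝ (fun q : Fin 3 → ℝ => (q ⨯₃ v) ⬝ᵥ (M *ᵥ (q ⨯₃ v))) := by
  simp only [cross_apply, dotProduct, mulVec, Fin.sum_univ_three, Matrix.cons_val_zero,
    Matrix.cons_val_one, Matrix.head_cons, Matrix.cons_val_two, Matrix.tail_cons]
  fun_prop

private lemma diff_dotv (v : Fin 3 → ℝ) :
    Differentiable ℝ (fun q : Fin 3 → ℝ => q ⬝ᵥ v) := by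
  simp only [dotProduct]
  exact Differentiable.fun_sum fun i _ => (differentiable_apply i).mul (differentiable_const _)

/-- The ellipsoid SDDF prior `f = -(det Q₀ · √(i+ε) + t₂)/t₀` (in the ellipsoid local frame)
satisfies the directional Eikonal equation `v'ᵀ ∇_{p'} f = -1`. -/
theorem ellipsoid_prior_eikonal
    (r : Fin 3 → ℝ) (hr : ∀ i, 0 < r i) (ε : ℝ) (hε : 0 ≤ ε)
    (p' v' : Fin 3 → ℝ) (hv' : v' ⬝ᵥ v' = 1) :
    let Q₀ : Matrix (Fin 3) (Fin 3) ℝ := Matrix.diagonal r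
    let Q₁ : Matrix (Fin 3) (Fin 3) ℝ := Q₀.det • Q₀⁻¹
    let t₀ : ℝ := v' ⬝ᵥ ((Q₁ ^ 2) *ᵥ v')
    let ind : (Fin 3 → ℝ) → ℝ := fun q =>
      t₀ - (q ⨯₃ v') ⬝ᵥ ((Q₀ ^ 2) *ᵥ (q ⨯₃ v'))
    let F : (Fin 3 → ℝ) → ℝ := fun q =>
      -(Q₀.det * Real.sqrt (ind q + ε) + q ⬝ᵥ ((Q₁ ^ 2) *ᵥ v')) / t₀
    t₀ ≠ 0 → 0 < ind p' + ε → fderiv ℝ F p' v' = -1 := by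
  intro Q₀ Q₁ t₀ ind F ht hi
  have hdiff : DifferentiableAt ℝ F p' := by
    have h1 : DifferentiableAt ℝ (fun q => ind q + ε) p' :=
      ((((diff_quad v' (Q₀ ^ 2)).const_sub t₀).add_const ε)) p'
    have h2 : DifferentiableAt ℝ (fun q => Real.sqrt (ind q + ε)) p' :=
      h1.sqrt (ne_of_gt hi)
    have h3 : DifferentiableAt ℝ (fun q => Q₀.det * Real.sqrt (ind q + ε)) p' :=
      (differentiableAt_const Q₀.det).mul h2
    have h4 : DifferentiableAt ℝ (fun q : Fin 3 → ℝ => q ⬝ᵥ ((Q₁ ^ 2) *ᵥ v')) p' :=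
      (diff_dotv ((Q₁ ^ 2) *ᵥ v')) p'
    have h5 : DifferentiableAt ℝ
        (fun q => -(Q₀.det * Real.sqrt (ind q + ε) + q ⬝ᵥ ((Q₁ ^ 2) *ᵥ v'))) p' :=
      (h3.add h4).neg
    exact h5.mul_const t₀⁻¹
  rw [← hdiff.lineDeriv_eq_fderiv]
  have key : ∀ t : ℝ, F (p' + t • v') = F p' - t := by
    intro t
    have hc : (p' + t • v') ⨯₃ v' = p' ⨯₃ v' := by
      simp [map_add, _root_.map_smul, cross_self]
    have hd : (p' + t • v') ⬝ᵥ ((Q₁ ^ 2) *ᵥ v') = p' ⬝ᵥ ((Q₁ ^ 2) *ᵥ v') + t * t₀ := by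
      rw [add_dotProduct, smul_dotProduct, smul_eq_mul]
    show -(Q₀.det * Real.sqrt (ind (p' + t • v') + ε) + (p' + t • v') ⬝ᵥ ((Q₁ ^ 2) *ᵥ v')) / t₀
        = F p' - t
    have hind : ind (p' + t • v') = ind p' := by simp only [ind, hc]
    rw [hind, hd]
    show _ = -(Q₀.det * Real.sqrt (ind p' + ε) + p' ⬝ᵥ ((Q₁ ^ 2) *ᵥ v')) / t₀ - t
    field_simp
    ring
  have : (fun t : ℝ => F (p' + t • v')) = fun t => F p' - t := funext key
  simp only [lineDeriv, lineDerivWithin, derivWithin_univ, this]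
  simpa using ((hasDerivAt_id (0:ℝ)).const_sub (F p')).deriv
end

section
/- Let f(p',v') satisfy the directional Eikonal equation v'^T ∇_{p'} f = −1, let q = p' + f(p',v') v' be the predicted intersection point, and let δ_f(p',v') = g(q, v') for any differentiable function g : ℝ³ × ℝ³ → ℝ. Then v'^T ∇_{p'} δ_f = 0, and hence the corrected prediction f̂ = f + δ_f also satisfies v'^T ∇_{p'} f̂ = −1. -/
open Matrix
open scoped Matrix

/-- Residual correction preserves the directional Eikonal equation: if `f` satisfies
`v'ᵀ∇f = -1` everywhere, `q(p') = p' + f(p') • v'` and `δ_f(p') = g (q p') v'` for a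
differentiable `g`, then `v'ᵀ∇δ_f = 0` and `f̂ = f + δ_f` satisfies `v'ᵀ∇f̂ = -1`. -/
theorem residual_preserves_eikonal
    (v' : Fin 3 → ℝ) (hv' : v' ⬝ᵥ v' = 1)
    (f : (Fin 3 → ℝ) → ℝ) (hf : Differentiable ℝ f)
    (hEik : ∀ p : Fin 3 → ℝ, fderiv ℝ f p v' = -1)
    (g : (Fin 3 → ℝ) → (Fin 3 → ℝ) → ℝ)
    (hg : Differentiable ℝ fun x => g x v') :
    (∀ p : Fin 3 → ℝ, fderiv ℝ (fun q => g (q + f q • v') v') p v' = 0) ∧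
    (∀ p : Fin 3 → ℝ,
      fderiv ℝ (fun q => f q + g (q + f q • v') v') p v' = -1) := by
  have hq : Differentiable ℝ (fun q : Fin 3 → ℝ => q + f q • v') :=
    differentiable_id.add (hf.smul_const v')
  have hqder : ∀ p : Fin 3 → ℝ,
      fderiv ℝ (fun q : Fin 3 → ℝ => q + f q • v') p v' = 0 := by
    intro p
    have h1 : HasFDerivAt (fun q : Fin 3 → ℝ => q + f q • v')
        (ContinuousLinearMap.id ℝ (Fin 3 → ℝ) + (fderiv ℝ f p).smulRight v') p :=
      (hasFDerivAt_id p).add ((hf p).hasFDerivAt.smul_const v')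
    rw [h1.fderiv]
    simp [hEik p]
  have key : ∀ p : Fin 3 → ℝ,
      fderiv ℝ (fun q => g (q + f q • v') v') p v' = 0 := by
    intro p
    have hcomp : (fun q => g (q + f q • v') v')
        = (fun x => g x v') ∘ (fun q : Fin 3 → ℝ => q + f q • v') := rfl
    rw [hcomp, fderiv_comp p (hg _) (hq p)]
    simp [ContinuousLinearMap.comp_apply, hqder p]
  refine ⟨key, fun p => ?_⟩
  have hd : DifferentiableAt ℝ (fun q => g (q + f q • v') v') p :=
    (hg _).comp p (hq p)
  rw [fderiv_fun_add (hf p) hd]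
  simp [hEik p, key p]
end
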